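/- Let X be a topological space, E ⊆ X a subspace, and f : E → ℝ a function. Suppose there exists a sequence of Baire-one functions f_n : X → ℝ such that (f_n|_E) converges uniformly to f on E. Then f can be extended to a Baire-one function g : X → ℝ (i.e., g is a pointwise limit of continuous real-valued functions on X and g|_E = f). -/

import Mathlib

open Set Filter Topology

/-- A map is Baire-one if it is a pointwise limit of continuous maps. -/
def BaireOne {X Y : Type*} [TopologicalSpace X] [TopologicalSpace Y] (f : X → Y) : Prop :=
  ∃ g : ℕ → X → Y, (∀ n, Continuous (g n)) ∧
    ∀ x, Filter.Tendsto (fun n => g n x) Filter.atTop (nhds (f x))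

/-- A regular transfinite sequence of open sets in `X`. -/
def RegularSeq {X : Type*} [TopologicalSpace X] (α : Ordinal.{0}) (U : Ordinal.{0} → Set X) : Prop :=
  (∀ ξ, ξ ≤ α → IsOpen (U ξ)) ∧ U 0 = ∅ ∧ U α = Set.univ ∧
  (∀ ξ η, ξ ≤ η → η ≤ α → U ξ ⊆ U η) ∧
  (∀ γ, γ ≤ α → Order.IsSuccLimit γ → U γ = ⋃ ξ < γ, U ξ)

/-- A functionally open set: the preimage of `(0,1]` under a continuous map to `[0,1]`. -/
def FunctionallyOpen {X : Type*} [TopologicalSpace X] (U : Set X) : Prop :=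
  ∃ φ : X → ℝ, Continuous φ ∧ (∀ x, φ x ∈ Set.Icc (0:ℝ) 1) ∧ U = φ ⁻¹' Set.Ioc (0:ℝ) 1

/-- A map is functionally countably fragmented. -/
def FunctCountFrag {X Y : Type*} [TopologicalSpace X] [MetricSpace Y] (f : X → Y) : Prop :=
  ∀ ε : ℝ, 0 < ε → ∃ (α : Ordinal.{0}) (U : Ordinal.{0} → Set X),
    α.card ≤ Cardinal.aleph0 ∧ RegularSeq α U ∧ (∀ ξ, ξ ≤ α → FunctionallyOpen (U ξ)) ∧
    ∀ ξ, ξ < α → Metric.diam (f '' (U (ξ + 1) \ U ξ)) < ε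

lemma baireOne_add {X : Type*} [TopologicalSpace X] {f g : X → ℝ}
    (hf : BaireOne f) (hg : BaireOne g) : BaireOne (fun x => f x + g x) := by
  obtain ⟨u, hu, hul⟩ := hf
  obtain ⟨v, hv, hvl⟩ := hg
  exact ⟨fun n x => u n x + v n x, fun n => (hu n).add (hv n),
    fun x => (hul x).add (hvl x)⟩

lemma baireOne_sub {X : Type*} [TopologicalSpace X] {f g : X → ℝ}
    (hf : BaireOne f) (hg : BaireOne g) : BaireOne (fun x => f x - g x) := by
  obtain ⟨u, hu, hul⟩ := hf
  obtain ⟨v, hv, hvl⟩ := hg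
  exact ⟨fun n x => u n x - v n x, fun n => (hu n).sub (hv n),
    fun x => (hul x).sub (hvl x)⟩

lemma baireOne_clamp {X : Type*} [TopologicalSpace X] {f : X → ℝ} (b : ℝ)
    (hf : BaireOne f) : BaireOne (fun x => min b (max (-b) (f x))) := by
  obtain ⟨u, hu, hul⟩ := hf
  exact ⟨fun n x => min b (max (-b) (u n x)),
    fun n => continuous_const.min (continuous_const.max (hu n)),
    fun x => tendsto_const_nhds.min (tendsto_const_nhds.max (hul x))⟩

lemma baireOne_tsum {X : Type*} [TopologicalSpace X] (h : ℕ → X → ℝ) (b : ℕ → ℝ)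
    (hb0 : ∀ k, 0 ≤ b k) (hb : Summable b) (hBaire : ∀ k, BaireOne (h k))
    (hbd : ∀ k x, |h k x| ≤ b k) : BaireOne (fun x => ∑' k, h k x) := by
  choose φ0 hφ0c hφ0t using hBaire
  set φ : ℕ → ℕ → X → ℝ := fun k j x => min (b k) (max (-(b k)) (φ0 k j x)) with hφdef
  have hφc : ∀ k j, Continuous (φ k j) :=
    fun k j => continuous_const.min (continuous_const.max (hφ0c k j))
  have hφt : ∀ k x, Tendsto (fun j => φ k j x) atTop (𝓝 (h k x)) := by
    intro k x
    have hk := hbd k x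
    rw [abs_le] at hk
    have h1 : Tendsto (fun j => max (-(b k)) (φ0 k j x)) atTop
        (𝓝 (max (-(b k)) (h k x))) := tendsto_const_nhds.max (hφ0t k x)
    have h2 : Tendsto (fun j => min (b k) (max (-(b k)) (φ0 k j x))) atTop
        (𝓝 (min (b k) (max (-(b k)) (h k x)))) := tendsto_const_nhds.min h1
    rwa [max_eq_right hk.1, min_eq_right hk.2] at h2
  have hφbd : ∀ k j x, |φ k j x| ≤ b k := by
    intro k j x
    rw [abs_le]
    constructor
    · exact le_min (by linarith [hb0 k]) (le_max_left _ _)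
    · exact min_le_left _ _
  refine ⟨fun j x => ∑ k ∈ Finset.range j, φ k j x,
    fun j => continuous_finset_sum _ (fun k _ => hφc k j), ?_⟩
  intro x
  have hsum : Summable (fun k => h k x) :=
    Summable.of_norm_bounded hb (fun k => by simpa [Real.norm_eq_abs] using hbd k x)
  rw [Metric.tendsto_atTop]
  intro ε hε
  -- choose K with small tail
  have htail : Tendsto (fun i => ∑' k, b (k + i)) atTop (𝓝 0) := tendsto_sum_nat_add b
  obtain ⟨K, hK⟩ := (htail.eventually (eventually_lt_nhds (show (0:ℝ) < ε/4 by linarith))).exists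
  -- finite part goes to 0
  have hfin : Tendsto (fun j => ∑ k ∈ Finset.range K, |φ k j x - h k x|) atTop (𝓝 0) := by
    have : ∀ k ∈ Finset.range K,
        Tendsto (fun j => |φ k j x - h k x|) atTop (𝓝 0) := by
      intro k _
      have hsub : Tendsto (fun j => φ k j x - h k x) atTop (𝓝 0) := by
        simpa using (hφt k x).sub (tendsto_const_nhds (x := h k x))
      simpa using hsub.abs
    simpa using tendsto_finset_sum (Finset.range K) this
  rw [Metric.tendsto_atTop] at hfin
  obtain ⟨J, hJ⟩ := hfin (ε/4) (by linarith)
  refine ⟨max J K, fun j hj => ?_⟩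
  have hjJ : J ≤ j := le_trans (le_max_left _ _) hj
  have hjK : K ≤ j := le_trans (le_max_right _ _) hj
  have hbK : Summable (fun k => b (k + K)) := by
    exact (summable_nat_add_iff K).mpr hb
  have hsK : Summable (fun k => h (k + K) x) := by
    exact (summable_nat_add_iff K).mpr hsum
  have hsplit : ∑' k, h k x = ∑ k ∈ Finset.range K, h k x + ∑' k, h (k + K) x :=
    (Summable.sum_add_tsum_nat_add K hsum).symm
  have hdecomp : ∑ k ∈ Finset.range j, φ k j x =
      ∑ k ∈ Finset.range K, φ k j x + ∑ k ∈ Finset.Ico K j, φ k j x := by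
    rw [Finset.range_eq_Ico, Finset.range_eq_Ico]
    exact (Finset.sum_Ico_consecutive _ (Nat.zero_le K) hjK).symm
  have est1 : |∑ k ∈ Finset.range K, φ k j x - ∑ k ∈ Finset.range K, h k x| < ε/4 := by
    rw [← Finset.sum_sub_distrib]
    calc |∑ k ∈ Finset.range K, (φ k j x - h k x)| ≤ ∑ k ∈ Finset.range K, |φ k j x - h k x| :=
          Finset.abs_sum_le_sum_abs _ _
      _ < ε/4 := by
          have := hJ j hjJ
          rw [Real.dist_eq] at this
          have hnn : 0 ≤ ∑ k ∈ Finset.range K, |φ k j x - h k x| :=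
            Finset.sum_nonneg (fun k _ => abs_nonneg _)
          rw [abs_of_nonneg (by linarith)] at this
          linarith
  have est2 : |∑ k ∈ Finset.Ico K j, φ k j x| ≤ ∑' k, b (k + K) := by
    calc |∑ k ∈ Finset.Ico K j, φ k j x| ≤ ∑ k ∈ Finset.Ico K j, |φ k j x| :=
          Finset.abs_sum_le_sum_abs _ _
      _ ≤ ∑ k ∈ Finset.Ico K j, b k := Finset.sum_le_sum (fun k _ => hφbd k j x)
      _ = ∑ k ∈ Finset.range (j - K), b (k + K) := by
          rw [Finset.sum_Ico_eq_sum_range]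
          exact Finset.sum_congr rfl (fun k _ => by ring_nf)
      _ ≤ ∑' k, b (k + K) := Summable.sum_le_tsum _ (fun k _ => hb0 _) hbK
  have est3 : |∑' k, h (k + K) x| ≤ ∑' k, b (k + K) := by
    calc |∑' k, h (k + K) x| ≤ ∑' k, |h (k + K) x| := by
          simpa [Real.norm_eq_abs] using
            norm_tsum_le_tsum_norm (f := fun k => h (k + K) x)
              (by simpa [Real.norm_eq_abs] using hsK.abs)
      _ ≤ ∑' k, b (k + K) := Summable.tsum_le_tsum (fun k => hbd _ x) hsK.abs hbK
  rw [Real.dist_eq]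
  have key : ∑ k ∈ Finset.range j, φ k j x - ∑' k, h k x =
      (∑ k ∈ Finset.range K, φ k j x - ∑ k ∈ Finset.range K, h k x) +
      ∑ k ∈ Finset.Ico K j, φ k j x - ∑' k, h (k + K) x := by
    rw [hdecomp, hsplit]; ring
  rw [key]
  calc |(∑ k ∈ Finset.range K, φ k j x - ∑ k ∈ Finset.range K, h k x) +
      ∑ k ∈ Finset.Ico K j, φ k j x - ∑' k, h (k + K) x|
      ≤ |∑ k ∈ Finset.range K, φ k j x - ∑ k ∈ Finset.range K, h k x| +
        |∑ k ∈ Finset.Ico K j, φ k j x| + |∑' k, h (k + K) x| := by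
        exact (abs_sub _ _).trans (by gcongr; exact abs_add_le _ _)
    _ < ε := by linarith

theorem stmt5 {X : Type*} [TopologicalSpace X] (E : Set X) (f : E → ℝ) (fn : ℕ → X → ℝ)
    (hfn : ∀ n, BaireOne (fn n))
    (hconv : TendstoUniformly (fun n (e : E) => fn n e) f Filter.atTop) :
    ∃ g : X → ℝ, BaireOne g ∧ ∀ e : E, g e = f e := by
  have hsel : ∀ k : ℕ, ∃ N : ℕ, ∀ e : E, dist (f e) (fn N e) < (1/2)^k / 4 := by
    intro k
    exact (Metric.tendstoUniformly_iff.mp hconv ((1/2)^k/4) (by positivity)).exists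
  choose m hm using hsel
  set b : ℕ → ℝ := fun k => (1/2 : ℝ)^k with hbdef
  have hb0 : ∀ k, 0 ≤ b k := fun k => by positivity
  have hbsum : Summable b := summable_geometric_two
  set d : ℕ → X → ℝ := fun k x => fn (m (k+1)) x - fn (m k) x with hddef
  set h : ℕ → X → ℝ := fun k x => min (b k) (max (-(b k)) (d k x)) with hhdef
  have hhB : ∀ k, BaireOne (h k) := fun k =>
    baireOne_clamp _ (baireOne_sub (hfn _) (hfn _))
  have hhbd : ∀ k x, |h k x| ≤ b k := by
    intro k x
    rw [abs_le]
    exact ⟨le_min (by linarith [hb0 k]) (le_max_left _ _), min_le_left _ _⟩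
  have hdE : ∀ k (e : E), |d k (e : X)| ≤ b k := by
    intro k e
    have h1 := hm k e
    have h2 := hm (k+1) e
    rw [Real.dist_eq] at h1 h2
    have h2' : |fn (m (k+1)) (e : X) - f e| < (1/2)^(k+1)/4 := by
      rw [abs_sub_comm]; exact h2
    have habs : |d k (e : X)| ≤ |fn (m (k+1)) (e : X) - f e| + |f e - fn (m k) (e : X)| := by
      have heq : d k (e : X) = (fn (m (k+1)) (e : X) - f e) + (f e - fn (m k) (e : X)) := by
        simp only [hddef]; ring
      rw [heq]; exact abs_add_le _ _
    have hp : (0 : ℝ) < (1/2)^k := by positivity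
    have hps : ((1 : ℝ)/2)^(k+1) = (1/2)^k * (1/2) := pow_succ _ _
    simp only [hbdef]
    linarith
  have hhE : ∀ k (e : E), h k (e : X) = d k (e : X) := by
    intro k e
    have := hdE k e
    rw [abs_le] at this
    simp only [hhdef]
    rw [max_eq_right this.1, min_eq_right this.2]
  have hT := baireOne_tsum h b hb0 hbsum hhB hhbd
  refine ⟨fun x => fn (m 0) x + ∑' k, h k x, baireOne_add (hfn (m 0)) hT, ?_⟩
  intro e
  have hsum : Summable (fun k => h k (e : X)) :=
    Summable.of_norm_bounded hbsum (fun k => by simpa [Real.norm_eq_abs] using hhbd k e)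
  have hps : Tendsto (fun K => ∑ k ∈ Finset.range K, h k (e : X)) atTop
      (𝓝 (∑' k, h k (e : X))) := hsum.hasSum.tendsto_sum_nat
  have hpart : ∀ K, ∑ k ∈ Finset.range K, h k (e : X) = fn (m K) e - fn (m 0) e := by
    intro K
    rw [Finset.sum_congr rfl (fun k _ => hhE k e)]
    simp only [hddef]
    exact Finset.sum_range_sub (fun k => fn (m k) (e : X)) K
  have hlim : Tendsto (fun K => fn (m K) (e : X)) atTop (𝓝 (f e)) := by
    rw [tendsto_iff_dist_tendsto_zero]
    have hup : Tendsto (fun K : ℕ => ((1:ℝ)/2)^K/4) atTop (𝓝 0) := by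
      simpa using (tendsto_pow_atTop_nhds_zero_of_lt_one (by norm_num : (0:ℝ) ≤ 1/2)
        (by norm_num : (1:ℝ)/2 < 1)).div_const 4
    refine squeeze_zero (fun K => dist_nonneg) (fun K => ?_) hup
    rw [dist_comm]
    exact (hm K e).le
  have hps' : Tendsto (fun K => ∑ k ∈ Finset.range K, h k (e : X)) atTop
      (𝓝 (f e - fn (m 0) e)) := by
    simp only [hpart]
    exact hlim.sub tendsto_const_nhds
  have heq := tendsto_nhds_unique hps hps'
  show fn (m 0) (e : X) + ∑' (k : ℕ), h k (e : X) = f e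
  rw [heq]
  ring
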